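/- arXiv:2201.12808 — 4 statements merged into one kernel-verified Lean document; each statement's English description precedes it below -/
import Mathlib

section
/- Let n ≥ 1 and let B ∈ Mₙ(ℂ) be a matrix such that B² is diagonalizable. Then there exist g ∈ GLₙ(ℂ), natural numbers r, k with 2r + k ≤ n, and scalars c₁, …, c_k ∈ ℂ such that g B g⁻¹ = Σ_{i=1}^{r} E_{2i−1,2i} + Σ_{j=1}^{k} c_j E_{2r+j,2r+j}. (This is the classification, up to conjugation by GL(n), of odd elements u = T_B of the queer Lie superalgebra q(n) such that [u,u] is semisimple, since T_B² equals the block-diagonal matrix diag(B², B²) and conjugation by GL(n) acts on the odd part of q(n) as the adjoint representation.) -/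
open Matrix

/-- A square complex matrix is diagonalizable (semisimple) if it is similar to a
diagonal matrix. -/
def Matrix.IsDiagonalizable {ι : Type*} [Fintype ι] [DecidableEq ι]
    (M : Matrix ι ι ℂ) : Prop :=
  ∃ g : Matrix ι ι ℂ, IsUnit g ∧ ∃ d : ι → ℂ, g * M * g⁻¹ = Matrix.diagonal d


open Matrix Submodule Module

variable {V : Type*} [AddCommGroup V] [Module ℂ V] [FiniteDimensional ℂ V]

lemma key_normal_form (n : ℕ) (hdim : Module.finrank ℂ V = n) (f : Module.End ℂ V)
    (w : Fin n → V) (d : Fin n → ℂ)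
    (hw : ⊤ ≤ Submodule.span ℂ (Set.range w))
    (hwd : ∀ j, f (f (w j)) = d j • w j) :
    ∃ r k : ℕ, ∃ h : 2 * r + k = n, ∃ c : Fin k → ℂ, ∃ v : Fin n → V,
      (⊤ ≤ Submodule.span ℂ (Set.range v)) ∧
      (∀ i : Fin r, f (v ⟨2 * i, by have := i.isLt; omega⟩) = 0) ∧
      (∀ i : Fin r, f (v ⟨2 * i + 1, by have := i.isLt; omega⟩)
        = v ⟨2 * i, by have := i.isLt; omega⟩) ∧
      (∀ l : Fin k, f (v ⟨2 * r + l, by have := l.isLt; omega⟩)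
        = c l • v ⟨2 * r + l, by have := l.isLt; omega⟩) := by
  classical
  set S : Module.End ℂ V := f * f with hSdef
  set W : Submodule ℂ V := LinearMap.ker S with hWdef
  set E : Submodule ℂ V := ⨆ (μ : ℂ) (_ : μ ≠ 0), f.eigenspace μ with hEdef
  -- E is contained in the range of S
  have hES : E ≤ LinearMap.range S := by
    refine iSup_le fun μ => iSup_le fun hμ x hx => ?_
    have hfx : f x = μ • x := Module.End.mem_eigenspace_iff.mp hx
    refine ⟨(μ ^ 2)⁻¹ • x, ?_⟩
    have hSx : S x = (μ ^ 2) • x := by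
      simp [hSdef, Module.End.mul_apply, hfx, smul_smul, sq]
    rw [S.map_smul, hSx, smul_smul, inv_mul_cancel₀ (pow_ne_zero 2 hμ), one_smul]
  -- W ⊔ E = ⊤
  have hWEtop : W ⊔ E = ⊤ := by
    refine top_unique (le_trans hw (Submodule.span_le.mpr ?_))
    rintro _ ⟨j, rfl⟩
    by_cases hdj : d j = 0
    · exact Submodule.mem_sup_left (by
        simp [hWdef, LinearMap.mem_ker, hSdef, Module.End.mul_apply, hwd j, hdj])
    · obtain ⟨μ, hμ2⟩ := IsAlgClosed.exists_pow_nat_eq (d j) (n := 2) (by norm_num)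
      have hμ : μ ≠ 0 := by rintro rfl; simp at hμ2; exact hdj hμ2.symm
      set p : V := ((2 * μ)⁻¹) • (f (w j) + μ • w j) with hpdef
      have h2μ : (2 * μ) ≠ 0 := by simp [hμ]
      have hff : f (f (w j)) = (μ * μ) • w j := by rw [hwd j, ← hμ2]; ring_nf
      have hfp : f p = μ • p := by
        rw [hpdef, f.map_smul, map_add, f.map_smul, hff]
        match_scalars
        all_goals field_simp
        all_goals try ring
        all_goals simp
      have hfq : f (w j - p) = (-μ) • (w j - p) := by
        rw [map_sub, hfp, hpdef]
        match_scalars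
        all_goals field_simp
        all_goals try ring
        all_goals simp
      have hp : p ∈ E := by
        refine Submodule.mem_iSup_of_mem μ (Submodule.mem_iSup_of_mem hμ ?_)
        exact Module.End.mem_eigenspace_iff.mpr hfp
      have hq : w j - p ∈ E := by
        refine Submodule.mem_iSup_of_mem (-μ) (Submodule.mem_iSup_of_mem (by simpa using hμ) ?_)
        exact Module.End.mem_eigenspace_iff.mpr hfq
      have : w j ∈ E := by
        have := E.add_mem hp hq; simpa using this
      exact Submodule.mem_sup_right this
  -- ker S ⊔ range S = ⊤
  have hkrtop : LinearMap.ker S ⊔ LinearMap.range S = ⊤ := by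
    refine top_unique (le_trans hw (Submodule.span_le.mpr ?_))
    rintro _ ⟨j, rfl⟩
    by_cases hdj : d j = 0
    · exact Submodule.mem_sup_left (by
        simp [LinearMap.mem_ker, hSdef, Module.End.mul_apply, hwd j, hdj])
    · refine Submodule.mem_sup_right ⟨(d j)⁻¹ • w j, ?_⟩
      rw [S.map_smul]
      have : S (w j) = d j • w j := by simp [hSdef, Module.End.mul_apply, hwd j]
      rw [this, smul_smul, inv_mul_cancel₀ hdj, one_smul]
  -- ker S ⊓ range S = ⊥
  have hkrbot : LinearMap.ker S ⊓ LinearMap.range S = ⊥ := by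
    have h1 := Submodule.finrank_sup_add_finrank_inf_eq (LinearMap.ker S) (LinearMap.range S)
    rw [hkrtop] at h1
    have h2 := LinearMap.finrank_range_add_finrank_ker S
    rw [finrank_top] at h1
    have h3 : finrank ℂ ↥(LinearMap.ker S ⊓ LinearMap.range S) = 0 := by omega
    exact Submodule.finrank_eq_zero.mp h3
  have hWEbot : W ⊓ E = ⊥ := by
    rw [← le_bot_iff, ← hkrbot]
    exact inf_le_inf le_rfl hES
  have hdimWE : finrank ℂ W + finrank ℂ E = n := by
    have h1 := Submodule.finrank_sup_add_finrank_inf_eq W E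
    rw [hWEtop, hWEbot, finrank_top, hdim] at h1
    simpa using h1.symm
  -- eigenbasis of E
  set t := finrank ℂ E with htdef
  have hsE : Submodule.span ℂ (⋃ (μ : ℂ) (_ : μ ≠ 0), (f.eigenspace μ : Set V)) = E := by
    rw [Submodule.span_iUnion₂]
    simp [hEdef, Submodule.span_eq]
  obtain ⟨sb, hsb_sub, hsb_span, hsb_ind⟩ :=
    exists_linearIndependent ℂ (⋃ (μ : ℂ) (_ : μ ≠ 0), (f.eigenspace μ : Set V))
  rw [hsE] at hsb_span
  have hsb_fin : sb.Finite := by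
    have : Finite sb := hsb_ind.finite
    exact Set.toFinite sb
  haveI : Fintype sb := hsb_fin.fintype
  have hcard : Fintype.card sb = t := by
    have h1 : finrank ℂ (span ℂ sb) = sb.toFinset.card := finrank_span_set_eq_card hsb_ind
    rw [hsb_span] at h1
    rw [Set.toFinset_card] at h1
    omega
  let e : Fin t → V := fun l => ((Fintype.equivFinOfCardEq hcard).symm l : V)
  have he_range : Set.range e = sb := by
    have : Set.range e = Subtype.val '' Set.range (Fintype.equivFinOfCardEq hcard).symm := by
      rw [← Set.range_comp]; rfl
    rw [this, Equiv.range_eq_univ, Set.image_univ, Subtype.range_coe]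
  have he_span : span ℂ (Set.range e) = E := by rw [he_range, hsb_span]
  have he_eig : ∀ l : Fin t, ∃ c : ℂ, f (e l) = c • e l := by
    intro l
    have hmem : e l ∈ sb := by
      rw [← he_range]; exact ⟨l, rfl⟩
    have := hsb_sub hmem
    simp only [Set.mem_iUnion] at this
    obtain ⟨μ, _, hμe⟩ := this
    exact ⟨μ, Module.End.mem_eigenspace_iff.mp hμe⟩
  choose ce hce using he_eig
  -- nilpotent part
  set K : Submodule ℂ V := LinearMap.ker f with hKdef
  have hKW : K ≤ W := by
    intro a ha
    have : f a = 0 := ha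
    simp [hWdef, LinearMap.mem_ker, hSdef, Module.End.mul_apply, this]
  set I : Submodule ℂ V := W.map f with hIdef
  have hIK : I ≤ K := by
    rintro _ ⟨a, ha, rfl⟩
    have : f (f a) = 0 := ha
    simpa [hKdef, LinearMap.mem_ker] using this
  set r := finrank ℂ I with hrdef
  let ub : Basis (Fin r) ℂ I := Module.finBasis ℂ I
  let u : Fin r → V := fun i => (ub i : V)
  have hspanu : span ℂ (Set.range u) = I := by
    have : Set.range u = I.subtype '' Set.range ub := by rw [← Set.range_comp]; rfl
    rw [this, ← LinearMap.map_span, ub.span_eq, Submodule.map_subtype_top]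
  have hmemu : ∀ i, u i ∈ I := fun i => (ub i).2
  have hxex : ∀ i : Fin r, ∃ xv, xv ∈ W ∧ f xv = u i := by
    intro i
    rcases hmemu i with ⟨a, ha, hfa⟩
    exact ⟨a, ha, hfa⟩
  choose x hxW hxfu using hxex
  -- complement of I inside K
  obtain ⟨Y', hY'⟩ := Submodule.exists_isCompl (I.comap K.subtype)
  set s := finrank ℂ Y' with hsdef
  let yb : Basis (Fin s) ℂ Y' := Module.finBasis ℂ Y'
  let y : Fin s → V := fun j => ((yb j : K) : V)
  have hyK : ∀ j, y j ∈ K := fun j => ((yb j) : K).2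
  have hfy : ∀ j, f (y j) = 0 := fun j => hyK j
  have hspany : span ℂ (Set.range y) = (Y'.map K.subtype) := by
    have : Set.range y = K.subtype '' (Y'.subtype '' Set.range yb) := by
      rw [← Set.range_comp, ← Set.range_comp]; rfl
    rw [this, ← LinearMap.map_span, ← LinearMap.map_span, yb.span_eq, Submodule.map_subtype_top]
  have hIYK : I ⊔ Y'.map K.subtype = K := by
    have h1 : Submodule.map K.subtype (I.comap K.subtype ⊔ Y') = K := by
      rw [hY'.sup_eq_top, Submodule.map_subtype_top]
    rw [Submodule.map_sup, Submodule.map_comap_subtype, inf_of_le_right hIK] at h1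
    exact h1
  -- dimension bookkeeping
  have hdimIK : r + s = finrank ℂ K := by
    have h1 := Submodule.finrank_add_eq_of_isCompl hY'
    have h2 : finrank ℂ (I.comap K.subtype) = r :=
      (Submodule.comapSubtypeEquivOfLe hIK).finrank_eq
    omega
  have hdimW : finrank ℂ W = r + finrank ℂ K := by
    have h1 := LinearMap.finrank_range_add_finrank_ker (f.domRestrict W)
    rw [LinearMap.range_domRestrict, LinearMap.ker_domRestrict] at h1
    have h2 : finrank ℂ (Submodule.comap W.subtype (LinearMap.ker f)) = finrank ℂ K :=
      (Submodule.comapSubtypeEquivOfLe hKW).finrank_eq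
    rw [h2, ← hIdef] at h1
    omega
  have h2rk : 2 * r + (s + t) = n := by omega
  -- the combined diagonal-part family
  let cf : Fin (s + t) → ℂ := fun l =>
    if h : (l : ℕ) < s then 0 else ce ⟨(l : ℕ) - s, by have := l.isLt; omega⟩
  let z : Fin (s + t) → V := fun l =>
    if h : (l : ℕ) < s then y ⟨(l : ℕ), h⟩ else e ⟨(l : ℕ) - s, by have := l.isLt; omega⟩
  have hz : ∀ l, f (z l) = cf l • z l := by
    intro l
    by_cases h : (l : ℕ) < s
    · simp only [z, cf, dif_pos h]
      rw [hfy]; simp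
    · simp only [z, cf, dif_neg h]
      exact hce _
  -- the full family
  let v : Fin n → V := fun j =>
    if h1 : (j : ℕ) < 2 * r then
      (if (j : ℕ) % 2 = 0 then u ⟨(j : ℕ) / 2, by omega⟩ else x ⟨(j : ℕ) / 2, by omega⟩)
    else z ⟨(j : ℕ) - 2 * r, by have := j.isLt; omega⟩
  have hveven : ∀ i : Fin r, v ⟨2 * i, by have := i.isLt; omega⟩ = u i := by
    intro i
    have hi := i.isLt
    simp only [v]
    rw [dif_pos (show 2 * (i : ℕ) < 2 * r by omega), if_pos (by omega)]
    congr 1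
    exact Fin.ext (by first | (simp; omega) | simp | omega)
  have hvodd : ∀ i : Fin r, v ⟨2 * i + 1, by have := i.isLt; omega⟩ = x i := by
    intro i
    have hi := i.isLt
    simp only [v]
    rw [dif_pos (show 2 * (i : ℕ) + 1 < 2 * r by omega), if_neg (by omega)]
    congr 1
    exact Fin.ext (by first | (simp; omega) | simp | omega)
  have hvz : ∀ l : Fin (s + t), v ⟨2 * r + l, by have := l.isLt; omega⟩ = z l := by
    intro l
    have hl := l.isLt
    simp only [v]
    rw [dif_neg (show ¬ (2 * r + (l : ℕ) < 2 * r) by omega)]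
    congr 1
    exact Fin.ext (by first | (simp; omega) | simp | omega)
  have hvy : ∀ j : Fin s, v ⟨2 * r + (j : ℕ), by have := j.isLt; omega⟩ = y j := by
    intro j
    have hj := j.isLt
    rw [hvz ⟨(j : ℕ), by omega⟩]
    simp only [z]
    rw [dif_pos (by simpa using hj)]
  have hve : ∀ l : Fin t, v ⟨2 * r + (s + (l : ℕ)), by have := l.isLt; omega⟩ = e l := by
    intro l
    have hl := l.isLt
    rw [hvz ⟨s + (l : ℕ), by omega⟩]
    simp only [z]
    rw [dif_neg (by simp)]
    congr 1
    exact Fin.ext (by first | (simp; omega) | simp | omega)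
  have hur : ∀ i : Fin r, u i ∈ Set.range v := fun i =>
    ⟨⟨2 * i, by have := i.isLt; omega⟩, hveven i⟩
  have hxr : ∀ i : Fin r, x i ∈ Set.range v := fun i =>
    ⟨⟨2 * i + 1, by have := i.isLt; omega⟩, hvodd i⟩
  have hyr : ∀ j : Fin s, y j ∈ Set.range v := fun j =>
    ⟨⟨2 * r + (j : ℕ), by have := j.isLt; omega⟩, hvy j⟩
  have her : ∀ l : Fin t, e l ∈ Set.range v := fun l =>
    ⟨⟨2 * r + (s + (l : ℕ)), by have := l.isLt; omega⟩, hve l⟩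
  have hKle : K ≤ span ℂ (Set.range v) := by
    rw [← hIYK]
    refine sup_le ?_ ?_
    · rw [← hspanu]
      exact span_mono (by rintro _ ⟨i, rfl⟩; exact hur i)
    · rw [← hspany]
      exact span_mono (by rintro _ ⟨j, rfl⟩; exact hyr j)
  have hWle : W ≤ span ℂ (Set.range v) := by
    intro a ha
    have hfa : f a ∈ I := ⟨a, ha, rfl⟩
    rw [← hspanu, mem_span_range_iff_exists_fun] at hfa
    obtain ⟨b, hb⟩ := hfa
    have hmem : a - ∑ i, b i • x i ∈ K := by
      simp only [hKdef, LinearMap.mem_ker, map_sub, map_sum, LinearMap.map_smul, hxfu]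
      rw [hb]
      simp
    have h1 : a - ∑ i, b i • x i ∈ span ℂ (Set.range v) := hKle hmem
    have h2 : (∑ i, b i • x i) ∈ span ℂ (Set.range v) :=
      Submodule.sum_mem _ fun i _ => Submodule.smul_mem _ _ (Submodule.subset_span (hxr i))
    have := Submodule.add_mem _ h1 h2
    simpa using this
  have hEle : E ≤ span ℂ (Set.range v) := by
    rw [← he_span]
    exact span_mono (by rintro _ ⟨l, rfl⟩; exact her l)
  have hspanv : ⊤ ≤ span ℂ (Set.range v) := by
    rw [← hWEtop]
    exact sup_le hWle hEle
  refine ⟨r, s + t, h2rk, cf, v, hspanv, ?_, ?_, ?_⟩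
  · intro i
    rw [hveven i]
    exact hIK (hmemu i)
  · intro i
    rw [hvodd i, hveven i]
    exact hxfu i
  · intro l
    rw [hvz l]
    exact hz l

theorem q_n_odd_classification' (n : ℕ) (hn : 1 ≤ n) (B : Matrix (Fin n) (Fin n) ℂ)
    (hB : ∃ g : Matrix (Fin n) (Fin n) ℂ, IsUnit g ∧
      ∃ d : Fin n → ℂ, g * (B * B) * g⁻¹ = Matrix.diagonal d) :
    ∃ g : Matrix (Fin n) (Fin n) ℂ, IsUnit g ∧
      ∃ r k : ℕ, ∃ hrk : 2 * r + k ≤ n, ∃ c : Fin k → ℂ,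
        g * B * g⁻¹ =
          (∑ i : Fin r, Matrix.single
              ⟨2 * (i : ℕ), by have := i.isLt; linarith⟩
              ⟨2 * (i : ℕ) + 1, by have := i.isLt; linarith⟩ (1 : ℂ)) +
          ∑ j : Fin k, c j • Matrix.single
              ⟨2 * r + (j : ℕ), by have := j.isLt; linarith⟩
              ⟨2 * r + (j : ℕ), by have := j.isLt; linarith⟩ (1 : ℂ) := by
  classical
  obtain ⟨g0, hg0, d0, hgd⟩ := hB
  have hg0d : IsUnit g0.det := (Matrix.isUnit_iff_isUnit_det g0).mp hg0
  haveI : Invertible g0 := g0.invertibleOfIsUnitDet hg0d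
  have hBB : B * B = g0⁻¹ * Matrix.diagonal d0 * g0 := by
    have h1 := congrArg (fun M => g0⁻¹ * M * g0) hgd
    rw [Matrix.mul_assoc g0 (B * B) g0⁻¹,
      ← Matrix.mul_assoc g0⁻¹ g0 ((B * B) * g0⁻¹),
      Matrix.nonsing_inv_mul _ hg0d, Matrix.one_mul,
      Matrix.mul_assoc (B * B) g0⁻¹ g0,
      Matrix.nonsing_inv_mul _ hg0d, Matrix.mul_one] at h1
    exact h1
  set w : Fin n → (Fin n → ℂ) := fun j => g0⁻¹ *ᵥ Pi.single j 1 with hwdef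
  have hwspan : ⊤ ≤ Submodule.span ℂ (Set.range w) := by
    intro ξ _
    rw [mem_span_range_iff_exists_fun]
    refine ⟨fun j => (g0 *ᵥ ξ) j, ?_⟩
    have hrfl : ∀ (x : Fin n → ℂ), g0⁻¹ *ᵥ x = g0⁻¹.mulVecLin x := fun _ => rfl
    have h4 : (∑ j, (g0 *ᵥ ξ) j • (Pi.single j 1 : Fin n → ℂ)) = g0 *ᵥ ξ := by
      funext i
      simp [Pi.single_apply]
    have h3 : ∑ j, (g0 *ᵥ ξ) j • w j
        = g0⁻¹ *ᵥ ∑ j, (g0 *ᵥ ξ) j • (Pi.single j 1 : Fin n → ℂ) := by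
      simp only [hwdef, hrfl, ← _root_.map_smul, ← map_sum]
    rw [h3, h4, Matrix.mulVec_mulVec, Matrix.nonsing_inv_mul _ hg0d, Matrix.one_mulVec]
  have hwd : ∀ j, B.mulVecLin (B.mulVecLin (w j)) = d0 j • w j := by
    intro j
    show B *ᵥ (B *ᵥ w j) = _
    rw [Matrix.mulVec_mulVec, hwdef, Matrix.mulVec_mulVec, hBB]
    rw [Matrix.mul_assoc (g0⁻¹ * Matrix.diagonal d0) g0 g0⁻¹,
        Matrix.mul_nonsing_inv _ hg0d, Matrix.mul_one]
    rw [← Matrix.mulVec_mulVec, Matrix.diagonal_mulVec_single]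
    rw [show (Pi.single j (d0 j * 1) : Fin n → ℂ) = d0 j • (Pi.single j 1 : Fin n → ℂ) by
      funext i; simp [Pi.single_apply]]
    rw [Matrix.mulVec_smul]
  obtain ⟨r, k, hrk, c, v, hspan, hv0, hv1, hv2⟩ :=
    key_normal_form n (by simp) B.mulVecLin w d0 hwspan hwd
  let b : Basis (Fin n) ℂ (Fin n → ℂ) :=
    basisOfTopLeSpanOfCardEqFinrank v hspan (by simp)
  have hb : ⇑b = v := coe_basisOfTopLeSpanOfCardEqFinrank v hspan _
  let P : Matrix (Fin n) (Fin n) ℂ := (Pi.basisFun ℂ (Fin n)).toMatrix ⇑b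
  haveI : Invertible P := (Pi.basisFun ℂ (Fin n)).invertibleToMatrix b
  have hPunit : IsUnit P := isUnit_of_invertible P
  have hPdet : IsUnit P.det := (Matrix.isUnit_iff_isUnit_det P).mp hPunit
  have hPij : ∀ i j, P i j = v j i := by
    intro i j
    simp [P, Basis.toMatrix, hb]
  set N : Matrix (Fin n) (Fin n) ℂ :=
    (∑ i : Fin r, Matrix.single
        ⟨2 * (i : ℕ), by have := i.isLt; omega⟩
        ⟨2 * (i : ℕ) + 1, by have := i.isLt; omega⟩ (1 : ℂ)) +
    ∑ j : Fin k, c j • Matrix.single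
        ⟨2 * r + (j : ℕ), by have := j.isLt; omega⟩
        ⟨2 * r + (j : ℕ), by have := j.isLt; omega⟩ (1 : ℂ) with hNdef
  have hN : ∀ (a bj : Fin n), N a bj =
      (∑ i' : Fin r, if 2 * (i' : ℕ) = (a : ℕ) ∧ 2 * (i' : ℕ) + 1 = (bj : ℕ)
        then (1 : ℂ) else 0) +
      (∑ l : Fin k, if 2 * r + (l : ℕ) = (a : ℕ) ∧ 2 * r + (l : ℕ) = (bj : ℕ)
        then c l else 0) := by
    intro a bj
    simp only [hNdef, Matrix.add_apply, Matrix.sum_apply, Matrix.smul_apply,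
      Matrix.single, Matrix.of_apply, Fin.ext_iff, smul_eq_mul,
      mul_ite, mul_one, mul_zero]
  have hNa : ∀ (a : Fin n) (i : Fin r),
      N a ⟨2 * (i : ℕ), by have := i.isLt; omega⟩ = 0 := by
    intro a i
    have hi := i.isLt
    rw [hN]
    rw [Finset.sum_eq_zero (fun (i' : Fin r) (_ : i' ∈ Finset.univ) =>
      if_neg (by have := i'.isLt; simp; omega))]
    rw [Finset.sum_eq_zero (fun (l : Fin k) (_ : l ∈ Finset.univ) =>
      if_neg (by have := l.isLt; simp; omega))]
    simp
  have hNb : ∀ (a : Fin n) (i : Fin r),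
      N a ⟨2 * (i : ℕ) + 1, by have := i.isLt; omega⟩
        = if a = ⟨2 * (i : ℕ), by have := i.isLt; omega⟩ then 1 else 0 := by
    intro a i
    have hi := i.isLt
    rw [hN]
    rw [Finset.sum_eq_zero (fun (l : Fin k) (_ : l ∈ Finset.univ) =>
      if_neg (by have := l.isLt; simp; omega)), add_zero]
    rw [Finset.sum_eq_single i ?_ ?_]
    · by_cases ha : a = ⟨2 * (i : ℕ), by omega⟩
      · rw [if_pos ⟨by rw [ha], by simp⟩, if_pos ha]
      · rw [if_neg, if_neg ha]
        rintro ⟨h1, -⟩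
        exact ha (Fin.ext (by simp; omega))
    · intro i' _ hne
      rw [if_neg]
      rintro ⟨-, h2⟩
      simp only [Fin.val_mk] at h2
      exact hne (Fin.ext (by omega))
    · intro h
      exact absurd (Finset.mem_univ i) h
  have hNc : ∀ (a : Fin n) (l : Fin k),
      N a ⟨2 * r + (l : ℕ), by have := l.isLt; omega⟩
        = if a = ⟨2 * r + (l : ℕ), by have := l.isLt; omega⟩ then c l else 0 := by
    intro a l
    have hl := l.isLt
    rw [hN]
    rw [Finset.sum_eq_zero (fun (i' : Fin r) (_ : i' ∈ Finset.univ) =>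
      if_neg (by have := i'.isLt; simp; omega)), zero_add]
    rw [Finset.sum_eq_single l ?_ ?_]
    · by_cases ha : a = ⟨2 * r + (l : ℕ), by omega⟩
      · rw [if_pos ⟨by rw [ha], by simp⟩, if_pos ha]
      · rw [if_neg, if_neg ha]
        rintro ⟨h1, -⟩
        exact ha (Fin.ext (by simp; omega))
    · intro l' _ hne
      rw [if_neg]
      rintro ⟨-, h2⟩
      simp only [Fin.val_mk] at h2
      exact hne (Fin.ext (by omega))
    · intro h
      exact absurd (Finset.mem_univ l) h
  have hBP : B * P = P * N := by
    ext a j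
    rw [Matrix.mul_apply, Matrix.mul_apply]
    have hlhs : ∑ k', B a k' * P k' j = B.mulVecLin (v j) a := by
      simp [Matrix.mulVecLin_apply, Matrix.mulVec, dotProduct, hPij]
    rw [hlhs]
    have hjn := j.isLt
    rcases lt_or_ge (j : ℕ) (2 * r) with hj | hj
    · rcases Nat.even_or_odd (j : ℕ) with ⟨m, hm⟩ | ⟨m, hm⟩
      · have hmr : m < r := by omega
        have hj_eq : j = ⟨2 * ((⟨m, hmr⟩ : Fin r) : ℕ), by omega⟩ := Fin.ext (by simp; omega)
        rw [hj_eq, hv0 ⟨m, hmr⟩]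
        rw [Finset.sum_eq_zero]
        · simp
        · intro k' _
          rw [hPij, hNa k' ⟨m, hmr⟩, mul_zero]
      · have hmr : m < r := by omega
        have hj_eq : j = ⟨2 * ((⟨m, hmr⟩ : Fin r) : ℕ) + 1, by omega⟩ := Fin.ext (by simp; omega)
        rw [hj_eq, hv1 ⟨m, hmr⟩]
        rw [Finset.sum_congr rfl (fun k' _ => by rw [hPij, hNb k' ⟨m, hmr⟩])]
        simp
    · have hlk : (j : ℕ) - 2 * r < k := by omega
      have hj_eq : j = ⟨2 * r + ((⟨(j : ℕ) - 2 * r, hlk⟩ : Fin k) : ℕ), by simp; omega⟩ :=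
        Fin.ext (by simp; omega)
      rw [hj_eq, hv2 ⟨(j : ℕ) - 2 * r, hlk⟩]
      rw [Finset.sum_congr rfl (fun k' _ => by rw [hPij, hNc k' ⟨(j : ℕ) - 2 * r, hlk⟩])]
      simp [mul_comm]
  have hPinvU : IsUnit P⁻¹ := by
    rw [Matrix.isUnit_iff_isUnit_det, Matrix.det_nonsing_inv, Ring.inverse_eq_inv']
    exact (isUnit_iff_ne_zero).mpr (inv_ne_zero ((isUnit_iff_ne_zero).mp hPdet))
  refine ⟨P⁻¹, hPinvU, r, k, hrk.le, c, ?_⟩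
  rw [Matrix.nonsing_inv_nonsing_inv P hPdet]
  have h5 : P⁻¹ * (B * P) = P⁻¹ * (P * N) := by rw [hBP]
  rw [← Matrix.mul_assoc, ← Matrix.mul_assoc, Matrix.nonsing_inv_mul P hPdet,
    Matrix.one_mul] at h5
  exact h5


/-- Classification of odd elements of q(n) with semisimple square, up to the
adjoint (conjugation) action of GL(n). -/
theorem q_n_odd_classification (n : ℕ) (hn : 1 ≤ n) (B : Matrix (Fin n) (Fin n) ℂ)
    (hB : (B * B).IsDiagonalizable) :
    ∃ g : Matrix (Fin n) (Fin n) ℂ, IsUnit g ∧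
      ∃ r k : ℕ, ∃ hrk : 2 * r + k ≤ n, ∃ c : Fin k → ℂ,
        g * B * g⁻¹ =
          (∑ i : Fin r, Matrix.single
              ⟨2 * (i : ℕ), by have := i.isLt; omega⟩
              ⟨2 * (i : ℕ) + 1, by have := i.isLt; omega⟩ (1 : ℂ)) +
          ∑ j : Fin k, c j • Matrix.single
              ⟨2 * r + (j : ℕ), by have := j.isLt; omega⟩
              ⟨2 * r + (j : ℕ), by have := j.isLt; omega⟩ (1 : ℂ) := by
  exact q_n_odd_classification' n hn B hB
end

section
/- Let m, n ≥ 1, let B ∈ M_{m×n}(ℂ) and C ∈ M_{n×m}(ℂ) be matrices with BC = 0 and CB = 0 (equivalently, the odd element u = [[0,B],[C,0]] of gl(m|n) satisfies [u,u] = 0). Then there exist g ∈ GL_m(ℂ), h ∈ GLₙ(ℂ), and integers 0 ≤ r ≤ s ≤ min(m,n) such that g B h⁻¹ = Σ_{i=1}^{r} E_{ii} and h C g⁻¹ = Σ_{i=r+1}^{s} E_{ii}. (This is the classification, up to the adjoint action of GL(m)×GL(n) given by (g,h)·(B,C) = (gBh⁻¹, hCg⁻¹), of square-zero odd elements of gl(m|n).)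 -/
set_option linter.all false
set_option linter.unusedVariables false


open Matrix

section Aux

private def tripleFun (a b c : ℕ) (x : Σ i : Fin 3, Fin (![a, b, c] i)) : Fin (a + b + c) :=
  ⟨![0, a, a + b] x.1 + (x.2 : ℕ), by
    obtain ⟨i, j⟩ := x
    have hj := j.isLt
    fin_cases i <;> simp_all <;> omega⟩

private noncomputable def tripleEquiv (a b c : ℕ) :
    (Σ i : Fin 3, Fin (![a, b, c] i)) ≃ Fin (a + b + c) :=
  Equiv.ofBijective (tripleFun a b c) (by
    rw [Fintype.bijective_iff_injective_and_card]
    constructor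
    · rintro ⟨i, j⟩ ⟨i', j'⟩ h
      have h' : (![0, a, a + b] i + (j : ℕ)) = ![0, a, a + b] i' + (j' : ℕ) :=
        congrArg Fin.val h
      have hj := j.isLt; have hj' := j'.isLt; clear h
      fin_cases i <;> fin_cases i' <;> simp_all [Fin.ext_iff] <;> first | omega | exact heq_of_eq (Fin.ext h')
    · simp [Fintype.card_sigma, Fin.sum_univ_three, Nat.add_assoc])

private theorem tripleEquiv_val (a b c : ℕ) (x : Σ i : Fin 3, Fin (![a, b, c] i)) :
    ((tripleEquiv a b c x : Fin (a + b + c)) : ℕ) = ![0, a, a + b] x.1 + (x.2 : ℕ) := rfl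

private lemma exists_inner_compl {K V : Type*} [Field K] [AddCommGroup V] [Module K V]
    {Q Kk : Submodule K V} (h : Q ≤ Kk) :
    ∃ R : Submodule K V, R ≤ Kk ∧ Q ⊓ R = ⊥ ∧ Q ⊔ R = Kk := by
  obtain ⟨R', hR'⟩ := Submodule.exists_isCompl (Q.comap Kk.subtype)
  have hQ : (Q.comap Kk.subtype).map Kk.subtype = Q := by
    rw [Submodule.map_comap_subtype, inf_eq_right.mpr h]
  refine ⟨R'.map Kk.subtype, Submodule.map_subtype_le _ _, ?_, ?_⟩
  · rw [← hQ, ← Submodule.map_inf _ (Submodule.injective_subtype Kk),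
      disjoint_iff.mp hR'.disjoint, Submodule.map_bot]
  · rw [← hQ, ← Submodule.map_sup, hR'.sup_eq_top, Submodule.map_top, Submodule.range_subtype]

private lemma disj_helper {K V : Type*} [Field K] [AddCommGroup V] [Module K V]
    {Kk A Bb P : Submodule K V} (hA : A ≤ Kk) (hB : Bb ≤ Kk) (hAB : A ⊓ Bb = ⊥)
    (hPK : Kk ⊓ P = ⊥) : Disjoint A (P ⊔ Bb) := by
  rw [disjoint_iff]
  have h1 : Kk ⊓ (P ⊔ Bb) = Bb := by
    rw [← inf_sup_assoc_of_le _ hB, hPK, bot_sup_eq]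
  calc A ⊓ (P ⊔ Bb) = A ⊓ (Kk ⊓ (P ⊔ Bb)) := by rw [← inf_assoc, inf_eq_left.mpr hA]
    _ = ⊥ := by rw [h1, hAB]

private lemma triple_internal {K V : Type*} [Field K] [AddCommGroup V] [Module K V]
    (p : Fin 3 → Submodule K V)
    (h0 : Disjoint (p 0) (p 1 ⊔ p 2)) (h1 : Disjoint (p 1) (p 0 ⊔ p 2))
    (h2 : Disjoint (p 2) (p 0 ⊔ p 1)) (htop : p 0 ⊔ p 1 ⊔ p 2 = ⊤) :
    DirectSum.IsInternal p := by
  apply DirectSum.isInternal_submodule_of_iSupIndep_of_iSup_eq_top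
  · intro i
    fin_cases i
    · refine h0.mono_right (iSup_le fun j => iSup_le fun hj => ?_)
      fin_cases j
      · simp at hj
      · exact le_sup_left
      · exact le_sup_right
    · refine h1.mono_right (iSup_le fun j => iSup_le fun hj => ?_)
      fin_cases j
      · exact le_sup_left
      · simp at hj
      · exact le_sup_right
    · refine h2.mono_right (iSup_le fun j => iSup_le fun hj => ?_)
      fin_cases j
      · exact le_sup_left
      · exact le_sup_right
      · simp at hj
  · rw [eq_top_iff, ← htop]
    exact sup_le (sup_le (le_iSup p 0) (le_iSup p 1)) (le_iSup p 2)

private lemma eq_sum_std {m n : ℕ} (r : ℕ) (hrm : r ≤ m) (hrn : r ≤ n)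
    (M : Matrix (Fin m) (Fin n) ℂ)
    (hM : ∀ i j, M i j = if (j : ℕ) < r ∧ (i : ℕ) = (j : ℕ) then 1 else 0) :
    M = ∑ i : Fin r, Matrix.single
        (⟨(i : ℕ), by omega⟩ : Fin m) (⟨(i : ℕ), by omega⟩ : Fin n) (1 : ℂ) := by
  ext i j
  rw [hM, Matrix.sum_apply]
  symm
  by_cases hc : (j : ℕ) < r ∧ (i : ℕ) = (j : ℕ)
  · rw [Finset.sum_eq_single (⟨(j : ℕ), hc.1⟩ : Fin r)]
    · simp [Matrix.single, Fin.ext_iff, hc.1, hc.2]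
    · intro k _ hk
      simp only [Matrix.single, Matrix.of_apply, ite_eq_right_iff, and_imp]
      intro _ h2
      exact absurd (Fin.ext (by simpa using congrArg Fin.val h2)) hk
    · intro hmem; exact absurd (Finset.mem_univ _) hmem
  · rw [if_neg hc]
    apply Finset.sum_eq_zero
    intro k _
    simp only [Matrix.single, Matrix.of_apply, ite_eq_right_iff, and_imp]
    intro h1 h2
    have hk := k.isLt
    have e1 := congrArg Fin.val h1
    have e2 := congrArg Fin.val h2
    simp at e1 e2
    exact absurd ⟨by omega, by omega⟩ hc

private lemma eq_sum_attach_std {m n : ℕ} (r s : ℕ) (hsn : s ≤ n) (hsm : s ≤ m)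
    (M : Matrix (Fin n) (Fin m) ℂ)
    (hM : ∀ i j, M i j = if r ≤ (j : ℕ) ∧ (j : ℕ) < s ∧ (i : ℕ) = (j : ℕ) then 1 else 0) :
    M = ∑ x ∈ (Finset.Ico r s).attach,
        Matrix.single
          (⟨(x : ℕ), by have := Finset.mem_Ico.mp x.2; omega⟩ : Fin n)
          (⟨(x : ℕ), by have := Finset.mem_Ico.mp x.2; omega⟩ : Fin m) (1 : ℂ) := by
  ext i j
  rw [hM, Matrix.sum_apply]
  symm
  by_cases hc : r ≤ (j : ℕ) ∧ (j : ℕ) < s ∧ (i : ℕ) = (j : ℕ)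
  · rw [Finset.sum_eq_single (⟨(j : ℕ), Finset.mem_Ico.mpr ⟨hc.1, hc.2.1⟩⟩ :
      {x // x ∈ Finset.Ico r s})]
    · simp [Matrix.single, Fin.ext_iff, hc.1, hc.2.1, hc.2.2]
    · intro k _ hk
      simp only [Matrix.single, Matrix.of_apply, ite_eq_right_iff, and_imp]
      intro _ h2
      exact absurd (Subtype.ext (by simpa using congrArg Fin.val h2)) hk
    · intro hmem; exact absurd (Finset.mem_attach _ _) hmem
  · rw [if_neg hc]
    apply Finset.sum_eq_zero
    intro k _
    simp only [Matrix.single, Matrix.of_apply, ite_eq_right_iff, and_imp]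
    intro h1 h2
    have hkm := Finset.mem_Ico.mp k.2
    have e1 := congrArg Fin.val h1
    have e2 := congrArg Fin.val h2
    simp at e1 e2
    exact absurd ⟨by omega, by omega, by omega⟩ hc

end Aux

set_option maxHeartbeats 1000000 in
/-- Classification of square-zero odd elements of gl(m|n) up to the adjoint action of
GL(m) × GL(n). -/
theorem gl_mn_square_zero_classification (m n : ℕ) (hm : 1 ≤ m) (hn : 1 ≤ n)
    (B : Matrix (Fin m) (Fin n) ℂ) (C : Matrix (Fin n) (Fin m) ℂ)
    (hBC : B * C = 0) (hCB : C * B = 0) :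
    ∃ g : Matrix (Fin m) (Fin m) ℂ, IsUnit g ∧
    ∃ h : Matrix (Fin n) (Fin n) ℂ, IsUnit h ∧
    ∃ r s : ℕ, ∃ hrs : r ≤ s, ∃ hs : s ≤ min m n,
      g * B * h⁻¹ =
        (∑ i : Fin r, Matrix.single
            ⟨(i : ℕ), by have := i.isLt; omega⟩
            ⟨(i : ℕ), by have := i.isLt; omega⟩ (1 : ℂ)) ∧
      h * C * g⁻¹ =
        ∑ i ∈ (Finset.Ico r s).attach,
          Matrix.single
            (⟨(i : ℕ), by have := Finset.mem_Ico.mp i.2; omega⟩ : Fin n)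
            (⟨(i : ℕ), by have := Finset.mem_Ico.mp i.2; omega⟩ : Fin m) (1 : ℂ) := by
  classical
  set fB : (Fin n → ℂ) →ₗ[ℂ] (Fin m → ℂ) := Matrix.toLin' B with hfBdef
  set fC : (Fin m → ℂ) →ₗ[ℂ] (Fin n → ℂ) := Matrix.toLin' C with hfCdef
  have hICKB : LinearMap.range fC ≤ LinearMap.ker fB := by
    rintro _ ⟨y, rfl⟩
    have h0 : Matrix.toLin' (B * C) y = 0 := by rw [hBC]; simp
    rw [Matrix.toLin'_mul] at h0
    exact LinearMap.mem_ker.mpr h0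
  have hIBKC : LinearMap.range fB ≤ LinearMap.ker fC := by
    rintro _ ⟨y, rfl⟩
    have h0 : Matrix.toLin' (C * B) y = 0 := by rw [hCB]; simp
    rw [Matrix.toLin'_mul] at h0
    exact LinearMap.mem_ker.mpr h0
  obtain ⟨W₁, hW₁⟩ := Submodule.exists_isCompl (LinearMap.ker fB)
  obtain ⟨V₂, hV₂⟩ := Submodule.exists_isCompl (LinearMap.ker fC)
  obtain ⟨W₃, hW₃le, hW₃inf, hW₃sup⟩ := exists_inner_compl hICKB
  obtain ⟨V₃, hV₃le, hV₃inf, hV₃sup⟩ := exists_inner_compl hIBKC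
  let eB : W₁ ≃ₗ[ℂ] LinearMap.range fB :=
    (Submodule.quotientEquivOfIsCompl _ _ hW₁).symm.trans fB.quotKerEquivRange
  let eC : V₂ ≃ₗ[ℂ] LinearMap.range fC :=
    (Submodule.quotientEquivOfIsCompl _ _ hV₂).symm.trans fC.quotKerEquivRange
  have heB : ∀ x : W₁, ((eB x : Fin m → ℂ)) = fB x := fun x => rfl
  have heC : ∀ x : V₂, ((eC x : Fin n → ℂ)) = fC x := fun x => rfl
  set r := Module.finrank ℂ W₁ with hrdef
  set s' := Module.finrank ℂ V₂ with hs'def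
  set tV := Module.finrank ℂ V₃ with htVdef
  set tW := Module.finrank ℂ W₃ with htWdef
  let bW₁ : Module.Basis (Fin r) ℂ W₁ := Module.finBasis ℂ W₁
  let bV₂ : Module.Basis (Fin s') ℂ V₂ := Module.finBasis ℂ V₂
  let bV₃ : Module.Basis (Fin tV) ℂ V₃ := Module.finBasis ℂ V₃
  let bW₃ : Module.Basis (Fin tW) ℂ W₃ := Module.finBasis ℂ W₃
  let bIB : Module.Basis (Fin r) ℂ (LinearMap.range fB) := bW₁.map eB
  let bIC : Module.Basis (Fin s') ℂ (LinearMap.range fC) := bV₂.map eC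
  let pV : Fin 3 → Submodule ℂ (Fin m → ℂ) := ![LinearMap.range fB, V₂, V₃]
  let pW : Fin 3 → Submodule ℂ (Fin n → ℂ) := ![W₁, LinearMap.range fC, W₃]
  have hIntV : DirectSum.IsInternal pV := by
    apply triple_internal
    · show Disjoint (LinearMap.range fB) (V₂ ⊔ V₃)
      exact disj_helper hIBKC hV₃le hV₃inf (disjoint_iff.mp hV₂.disjoint)
    · show Disjoint V₂ (LinearMap.range fB ⊔ V₃)
      rw [hV₃sup]; exact hV₂.disjoint.symm
    · show Disjoint V₃ (LinearMap.range fB ⊔ V₂)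
      rw [sup_comm]
      exact disj_helper hV₃le hIBKC (by rw [inf_comm]; exact hV₃inf)
        (disjoint_iff.mp hV₂.disjoint)
    · show LinearMap.range fB ⊔ V₂ ⊔ V₃ = ⊤
      rw [sup_right_comm, hV₃sup]
      exact hV₂.sup_eq_top
  have hIntW : DirectSum.IsInternal pW := by
    apply triple_internal
    · show Disjoint W₁ (LinearMap.range fC ⊔ W₃)
      rw [hW₃sup]; exact hW₁.disjoint.symm
    · show Disjoint (LinearMap.range fC) (W₁ ⊔ W₃)
      exact disj_helper hICKB hW₃le hW₃inf (disjoint_iff.mp hW₁.disjoint)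
    · show Disjoint W₃ (W₁ ⊔ LinearMap.range fC)
      exact disj_helper hW₃le hICKB (by rw [inf_comm]; exact hW₃inf)
        (disjoint_iff.mp hW₁.disjoint)
    · show W₁ ⊔ LinearMap.range fC ⊔ W₃ = ⊤
      rw [sup_assoc, hW₃sup, sup_comm]
      exact hW₁.sup_eq_top
  let vV : ∀ i : Fin 3, Module.Basis (Fin (![r, s', tV] i)) ℂ (pV i) :=
    Fin.cons bIB (Fin.cons bV₂ (Fin.cons bV₃ finZeroElim))
  let vW : ∀ i : Fin 3, Module.Basis (Fin (![r, s', tW] i)) ℂ (pW i) :=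
    Fin.cons bW₁ (Fin.cons bIC (Fin.cons bW₃ finZeroElim))
  let bV0 := hIntV.collectedBasis vV
  let cW0 := hIntW.collectedBasis vW
  have hmEq : r + s' + tV = m := by
    have h1 := Module.finrank_eq_card_basis bV0
    rw [Module.finrank_fin_fun] at h1
    simp only [Fintype.card_sigma, Fin.sum_univ_three, Matrix.cons_val_zero,
      Matrix.cons_val_one, Matrix.head_cons, Matrix.cons_val_two, Matrix.tail_cons,
      Fintype.card_fin] at h1
    omega
  have hnEq : r + s' + tW = n := by
    have h1 := Module.finrank_eq_card_basis cW0
    rw [Module.finrank_fin_fun] at h1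
    simp only [Fintype.card_sigma, Fin.sum_univ_three, Matrix.cons_val_zero,
      Matrix.cons_val_one, Matrix.head_cons, Matrix.cons_val_two, Matrix.tail_cons,
      Fintype.card_fin] at h1
    omega
  let eV : (Σ i : Fin 3, Fin (![r, s', tV] i)) ≃ Fin m :=
    (tripleEquiv r s' tV).trans (finCongr hmEq)
  let eW : (Σ i : Fin 3, Fin (![r, s', tW] i)) ≃ Fin n :=
    (tripleEquiv r s' tW).trans (finCongr hnEq)
  let b : Module.Basis (Fin m) ℂ (Fin m → ℂ) := bV0.reindex eV
  let c : Module.Basis (Fin n) ℂ (Fin n → ℂ) := cW0.reindex eW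
  have heVval : ∀ a : (Σ i : Fin 3, Fin (![r, s', tV] i)),
      ((eV a : Fin m) : ℕ) = ![0, r, r + s'] a.1 + (a.2 : ℕ) := fun a => rfl
  have heWval : ∀ a : (Σ i : Fin 3, Fin (![r, s', tW] i)),
      ((eW a : Fin n) : ℕ) = ![0, r, r + s'] a.1 + (a.2 : ℕ) := fun a => rfl
  have hbval : ∀ a, b (eV a) = ↑(vV a.1 a.2) := by
    intro a
    rw [Module.Basis.reindex_apply, Equiv.symm_apply_apply, DirectSum.IsInternal.collectedBasis_coe]
  have hcval : ∀ a, c (eW a) = ↑(vW a.1 a.2) := by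
    intro a
    rw [Module.Basis.reindex_apply, Equiv.symm_apply_apply, DirectSum.IsInternal.collectedBasis_coe]
  have hbval0 : ∀ k : Fin r, b (eV ⟨0, k⟩) = ↑(bIB k) := fun k => hbval ⟨0, k⟩
  have hbval1 : ∀ k : Fin s', b (eV ⟨1, k⟩) = ↑(bV₂ k) := fun k => hbval ⟨1, k⟩
  have hcval0 : ∀ k : Fin r, c (eW ⟨0, k⟩) = ↑(bW₁ k) := fun k => hcval ⟨0, k⟩
  have hcval1 : ∀ k : Fin s', c (eW ⟨1, k⟩) = ↑(bIC k) := fun k => hcval ⟨1, k⟩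
  -- the four structural facts
  have F1 : ∀ (j : Fin n) (hj : (j : ℕ) < r),
      fB (c j) = b ⟨(j : ℕ), by omega⟩ := by
    intro j hj
    have hj' : j = eW ⟨0, ⟨(j : ℕ), hj⟩⟩ := by
      apply Fin.ext; rw [heWval]; simp
    conv_lhs => rw [hj']
    erw [hcval0 ⟨(j : ℕ), hj⟩]
    have h2 : fB ↑(bW₁ ⟨(j : ℕ), hj⟩) = ↑(bIB ⟨(j : ℕ), hj⟩) := by
      rw [Module.Basis.map_apply, heB]
    rw [h2, ← hbval0]
    congr 1
    apply Fin.ext; rw [heVval]; simp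
  have F2 : ∀ j : Fin n, r ≤ (j : ℕ) → fB (c j) = 0 := by
    intro j hj
    obtain ⟨⟨i, k⟩, ha⟩ := eW.surjective j
    have hmem : (c j : Fin n → ℂ) ∈ pW i := by
      rw [← ha, hcval]; exact (vW i k).2
    have hv : (j : ℕ) = ![0, r, r + s'] i + (k : ℕ) := by
      rw [← ha]; exact heWval ⟨i, k⟩
    have hk := k.isLt
    have hle : pW i ≤ LinearMap.ker fB := by
      fin_cases i
      · exfalso; simp at hv hk; omega
      · exact hICKB
      · exact hW₃le
    exact LinearMap.mem_ker.mp (hle hmem)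
  have F3 : ∀ k : Fin s', fC (b (eV ⟨1, k⟩)) = c (eW ⟨1, k⟩) := by
    intro k
    rw [hbval1, hcval1]
    rw [Module.Basis.map_apply, heC]
  have F4 : ∀ j : Fin m, ((j : ℕ) < r ∨ r + s' ≤ (j : ℕ)) → fC (b j) = 0 := by
    intro j hj
    obtain ⟨⟨i, k⟩, ha⟩ := eV.surjective j
    have hmem : (b j : Fin m → ℂ) ∈ pV i := by
      rw [← ha, hbval]; exact (vV i k).2
    have hv : (j : ℕ) = ![0, r, r + s'] i + (k : ℕ) := by
      rw [← ha]; exact heVval ⟨i, k⟩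
    have hk := k.isLt
    have hle : pV i ≤ LinearMap.ker fC := by
      fin_cases i
      · exact hIBKC
      · exfalso; simp at hv hk; omega
      · exact hV₃le
    exact LinearMap.mem_ker.mp (hle hmem)
  -- matrices
  set g : Matrix (Fin m) (Fin m) ℂ := b.toMatrix (Pi.basisFun ℂ (Fin m)) with hgdef
  set h : Matrix (Fin n) (Fin n) ℂ := c.toMatrix (Pi.basisFun ℂ (Fin n)) with hhdef
  have hg : IsUnit g := by
    have := b.invertibleToMatrix (Pi.basisFun ℂ (Fin m))
    exact isUnit_of_invertible g
  have hh : IsUnit h := by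
    have := c.invertibleToMatrix (Pi.basisFun ℂ (Fin n))
    exact isUnit_of_invertible h
  have hginv : g⁻¹ = (Pi.basisFun ℂ (Fin m)).toMatrix b :=
    Matrix.inv_eq_right_inv (b.toMatrix_mul_toMatrix_flip _)
  have hhinv : h⁻¹ = (Pi.basisFun ℂ (Fin n)).toMatrix c :=
    Matrix.inv_eq_right_inv (c.toMatrix_mul_toMatrix_flip _)
  have hB' : B = LinearMap.toMatrix (Pi.basisFun ℂ (Fin n)) (Pi.basisFun ℂ (Fin m)) fB := by
    rw [show LinearMap.toMatrix (Pi.basisFun ℂ (Fin n)) (Pi.basisFun ℂ (Fin m))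
      = LinearMap.toMatrix' from rfl]
    exact (LinearMap.toMatrix'_toLin' B).symm
  have hC' : C = LinearMap.toMatrix (Pi.basisFun ℂ (Fin m)) (Pi.basisFun ℂ (Fin n)) fC := by
    rw [show LinearMap.toMatrix (Pi.basisFun ℂ (Fin m)) (Pi.basisFun ℂ (Fin n))
      = LinearMap.toMatrix' from rfl]
    exact (LinearMap.toMatrix'_toLin' C).symm
  have hBmat : g * B * h⁻¹ = LinearMap.toMatrix c b fB := by
    rw [hhinv, hgdef, hB', basis_toMatrix_mul_linearMap_toMatrix,
      linearMap_toMatrix_mul_basis_toMatrix]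
  have hCmat : h * C * g⁻¹ = LinearMap.toMatrix b c fC := by
    rw [hginv, hhdef, hC', basis_toMatrix_mul_linearMap_toMatrix,
      linearMap_toMatrix_mul_basis_toMatrix]

  have hE1 : ∀ i j, (LinearMap.toMatrix c b fB) i j =
      if (j : ℕ) < r ∧ (i : ℕ) = (j : ℕ) then 1 else 0 := by
    intro i j
    rw [LinearMap.toMatrix_apply]
    by_cases hj : (j : ℕ) < r
    · rw [F1 j hj, Module.Basis.repr_self, Finsupp.single_apply]
      by_cases hij : (i : ℕ) = (j : ℕ)
      · simp [Fin.ext_iff, hij, hj]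
      · simp [Fin.ext_iff, hij, (show ¬((j : ℕ) = (i : ℕ)) from fun hh => hij hh.symm)]
    · rw [F2 j (by omega), map_zero, Finsupp.coe_zero, Pi.zero_apply,
        if_neg (fun hcon => hj hcon.1)]
  have hE2 : ∀ i j, (LinearMap.toMatrix b c fC) i j =
      if r ≤ (j : ℕ) ∧ (j : ℕ) < r + s' ∧ (i : ℕ) = (j : ℕ) then 1 else 0 := by
    intro i j
    rw [LinearMap.toMatrix_apply]
    by_cases hj : r ≤ (j : ℕ) ∧ (j : ℕ) < r + s'
    · obtain ⟨hj1, hj2⟩ := hj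
      have hj' : j = eV ⟨1, ⟨(j : ℕ) - r,
          by simp only [Matrix.cons_val_one, Matrix.head_cons, Matrix.cons_val_zero]; omega⟩⟩ := by
        apply Fin.ext; rw [heVval]; simp; omega
      conv_lhs => rw [hj']; erw [F3 ⟨(j : ℕ) - r, by omega⟩]
      have hw : eW ⟨1, ⟨(j : ℕ) - r,
          by simp only [Matrix.cons_val_one, Matrix.head_cons, Matrix.cons_val_zero]; omega⟩⟩
          = ⟨(j : ℕ), by omega⟩ := by
        apply Fin.ext; rw [heWval]; simp; omega
      erw [hw]; rw [Module.Basis.repr_self, Finsupp.single_apply]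
      by_cases hij : (i : ℕ) = (j : ℕ)
      · simp [Fin.ext_iff, hij, hj1, hj2]
      · simp [Fin.ext_iff, hij, (show ¬((j : ℕ) = (i : ℕ)) from fun hh => hij hh.symm)]
    · rw [F4 j (by omega), map_zero, Finsupp.coe_zero, Pi.zero_apply,
        if_neg (fun hcon => hj ⟨hcon.1, hcon.2.1⟩)]
  refine ⟨g, hg, h, hh, r, r + s', Nat.le_add_right r s', by omega, ?_, ?_⟩
  · exact hBmat.trans (eq_sum_std r (by omega) (by omega) _ hE1)
  · exact hCmat.trans (eq_sum_attach_std r (r + s') (by omega) (by omega) _ hE2)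
end

section
/- Let m, n ≥ 1, let B ∈ M_{m×n}(ℂ) and C ∈ M_{n×m}(ℂ) be matrices such that both BC and CB are diagonalizable (equivalently, the square of the odd element u = [[0,B],[C,0]] of gl(m|n) is a semisimple even element). Then there exist g ∈ GL_m(ℂ) and h ∈ GLₙ(ℂ) such that the matrices g B h⁻¹ and h C g⁻¹ are both rectangular-diagonal, i.e., all of their entries in positions (i,j) with i ≠ j vanish. (This is the gl(m|n) case of the normal form, as a sum of root vectors for mutually orthogonal linearly independent isotropic roots, for odd elements of a finite-dimensional symmetrizable Kac–Moody Lie superalgebra whose bracket square is semisimple.) -/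
open Matrix

open Module Submodule


/-- A diagonalizable matrix has eigenspaces spanning. -/
lemma eig_top_of_isDiagonalizable {k : ℕ} {M : Matrix (Fin k) (Fin k) ℂ}
    (h : ∃ g : Matrix (Fin k) (Fin k) ℂ, IsUnit g ∧ ∃ d : Fin k → ℂ, g * M * g⁻¹ = diagonal d) :
    ⨆ μ : ℂ, Module.End.eigenspace (M.mulVecLin) μ = ⊤ := by
  obtain ⟨g, hg, d, hgd⟩ := h
  have hdet : IsUnit g.det := (Matrix.isUnit_iff_isUnit_det g).mp hg
  have hMg : M * g⁻¹ = g⁻¹ * Matrix.diagonal d := by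
    have h1 : g⁻¹ * (g * M * g⁻¹) = g⁻¹ * Matrix.diagonal d := by rw [hgd]
    calc M * g⁻¹ = g⁻¹ * g * M * g⁻¹ := by rw [Matrix.nonsing_inv_mul g hdet, one_mul]
    _ = g⁻¹ * Matrix.diagonal d := by rw [Matrix.mul_assoc, Matrix.mul_assoc, ← Matrix.mul_assoc g M g⁻¹, h1]
  rw [eq_top_iff]
  intro x _
  have hx : x = g⁻¹ *ᵥ (g *ᵥ x) := by
    rw [Matrix.mulVec_mulVec, Matrix.nonsing_inv_mul g hdet, Matrix.one_mulVec]
  rw [hx]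
  set y := g *ᵥ x with hy
  have hdec : g⁻¹ *ᵥ y = ∑ i, y i • (g⁻¹ *ᵥ (Pi.single i 1 : Fin k → ℂ)) := by
    have h2 : y = ∑ i, y i • (Pi.single i 1 : Fin k → ℂ) := by
      ext j; simp [Pi.single_apply]
    conv_lhs => rw [h2]
    show (g⁻¹).mulVecLin _ = _
    rw [map_sum]
    simp only [_root_.map_smul]
    rfl
  rw [hdec]
  apply Submodule.sum_mem
  intro i _
  apply Submodule.smul_mem
  apply Submodule.mem_iSup_of_mem (d i)
  rw [Module.End.mem_eigenspace_iff]
  show M *ᵥ (g⁻¹ *ᵥ _) = _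
  rw [Matrix.mulVec_mulVec, hMg, ← Matrix.mulVec_mulVec]
  congr 1
  rw [Matrix.diagonal_mulVec_single]
  ext j
  simp only [Pi.single_apply, Pi.smul_apply, smul_eq_mul]
  rcases eq_or_ne j i with rfl | hne <;> simp [mul_comm]


variable {V : Type} [AddCommGroup V] [Module ℂ V]

lemma exists_nonzero_eigenvalue {f : Module.End ℂ V}
    (hf : ⨆ μ : ℂ, Module.End.eigenspace f μ = ⊤) (hne : f ≠ 0) :
    ∃ μ : ℂ, μ ≠ 0 ∧ ∃ v : V, v ≠ 0 ∧ f v = μ • v := by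
  by_contra hcon
  push_neg at hcon
  apply hne
  have hker : ⊤ ≤ LinearMap.ker f := by
    rw [← hf]
    apply iSup_le
    intro μ
    rcases eq_or_ne μ 0 with rfl | hμ
    · intro x hx
      rw [Module.End.mem_eigenspace_iff] at hx
      simpa using hx
    · intro x hx
      rw [Module.End.mem_eigenspace_iff] at hx
      rcases eq_or_ne x 0 with rfl | hx0
      · simp
      · exact absurd hx (hcon μ hμ x hx0)
  ext x
  exact LinearMap.mem_ker.mp (hker trivial)

lemma exists_invariant_compl {f : Module.End ℂ V}
    (hf : ⨆ μ : ℂ, Module.End.eigenspace f μ = ⊤) {μ : ℂ} {v : V}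
    (hv : f v = μ • v) :
    ∃ p : Submodule ℂ V, IsCompl (ℂ ∙ v) p ∧ ∀ x ∈ p, f x ∈ p := by
  set E := Module.End.eigenspace f μ with hE
  have hvE : v ∈ E := Module.End.mem_eigenspace_iff.mpr hv
  have hspanE : (ℂ ∙ v) ≤ E := (span_singleton_le_iff_mem v E).mpr hvE
  -- complement of span v inside E
  obtain ⟨U₀, hU₀⟩ := Submodule.exists_isCompl (ℂ ∙ (⟨v, hvE⟩ : E))
  set U : Submodule ℂ V := U₀.map E.subtype with hU
  have hUE : U ≤ E := by rw [hU]; rintro x ⟨u, _, rfl⟩; exact u.2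
  have hsupU : (ℂ ∙ v) ⊔ U = E := by
    have := congrArg (Submodule.map E.subtype) hU₀.codisjoint.eq_top
    rw [Submodule.map_sup, Submodule.map_top, Submodule.range_subtype] at this
    rw [← this, hU]
    congr 1
    rw [Submodule.map_span]
    simp
  have hdisjU : Disjoint (ℂ ∙ v) U := by
    rw [disjoint_def]
    intro x hxv hxU
    obtain ⟨a, rfl⟩ := Submodule.mem_span_singleton.mp hxv
    obtain ⟨u, hu, hux⟩ := hxU
    have : u = a • (⟨v, hvE⟩ : E) := by
      apply Subtype.ext
      simpa using hux
    have hmem : u ∈ (ℂ ∙ (⟨v, hvE⟩ : E)) ⊓ U₀ :=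
      ⟨Submodule.mem_span_singleton.mpr ⟨a, this.symm⟩, hu⟩
    rw [hU₀.disjoint.eq_bot] at hmem
    rw [← hux, hmem]
    simp
  -- S : sup of other eigenspaces
  set S : Submodule ℂ V := ⨆ μ' ≠ μ, Module.End.eigenspace f μ' with hS
  have hSinv : ∀ x ∈ S, f x ∈ S := by
    intro x hx
    refine Submodule.iSup_induction (motive := fun y => f y ∈ S) _ (by simpa [hS] using hx) ?_ (by simp) ?_
    · intro μ' y hy
      rcases eq_or_ne μ' μ with rfl | hne
      · have hy0 : y = 0 := by simpa using hy
        simp [hy0]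
      · rw [iSup_pos hne] at hy
        rw [Module.End.mem_eigenspace_iff.mp hy]
        exact Submodule.mem_iSup_of_mem μ'
          (by rw [iSup_pos hne]; exact Submodule.smul_mem _ _ hy)
    · intro x y hx hy
      rw [map_add]; exact Submodule.add_mem _ hx hy
  refine ⟨U ⊔ S, ⟨?_, ?_⟩, ?_⟩
  · -- disjoint
    rw [disjoint_def]
    intro x hxv hxUS
    have hxE : x ∈ E := hspanE hxv
    have hES : E ⊓ S = ⊥ := by
      have := (Module.End.eigenspaces_iSupIndep f) μ
      exact this.eq_bot
    have hxU : x ∈ U := by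
      have hmod : (U ⊔ S) ⊓ E = U ⊔ (S ⊓ E) := sup_inf_assoc_of_le S hUE
      have : x ∈ U ⊔ (S ⊓ E) := hmod ▸ Submodule.mem_inf.mpr ⟨hxUS, hxE⟩
      rwa [inf_comm, hES, sup_bot_eq] at this
    have : x ∈ (ℂ ∙ v) ⊓ U := Submodule.mem_inf.mpr ⟨hxv, hxU⟩
    rw [hdisjU.eq_bot] at this
    simpa using this
  · -- codisjoint
    rw [codisjoint_iff, ← sup_assoc, hsupU, eq_top_iff, ← hf]
    apply iSup_le
    intro μ'
    rcases eq_or_ne μ' μ with rfl | hne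
    · exact le_sup_left
    · exact le_trans (by rw [hS]; exact le_biSup _ hne) le_sup_right
  · -- invariance
    intro x hx
    obtain ⟨u, hu, s, hs, rfl⟩ := Submodule.mem_sup.mp hx
    rw [map_add]
    apply Submodule.add_mem
    · have huE : u ∈ E := hUE hu
      have : f u = μ • u := Module.End.mem_eigenspace_iff.mp huE
      rw [this]
      exact Submodule.mem_sup_left (Submodule.smul_mem _ _ hu)
    · exact Submodule.mem_sup_right (hSinv s hs)


lemma compl_comap {V W : Type} [AddCommGroup V] [Module ℂ V] [AddCommGroup W] [Module ℂ W]
    [FiniteDimensional ℂ V] [FiniteDimensional ℂ W]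
    (b : W →ₗ[ℂ] V) {V₁ : Submodule ℂ V} {w : W}
    (hcodim : finrank ℂ V₁ + 1 = finrank ℂ V) (hbw : b w ∉ V₁) :
    IsCompl (ℂ ∙ w) (V₁.comap b) ∧ finrank ℂ (V₁.comap b) + 1 = finrank ℂ W := by
  have hw0 : w ≠ 0 := by rintro rfl; exact hbw (by simp)
  set W₁ := V₁.comap b with hW₁
  have hker : W₁ = LinearMap.ker (V₁.mkQ ∘ₗ b) := by
    rw [LinearMap.ker_comp, Submodule.ker_mkQ]
  have hquot : finrank ℂ (V ⧸ V₁) = 1 := by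
    have := Submodule.finrank_quotient_add_finrank V₁
    omega
  have hrange : finrank ℂ (LinearMap.range (V₁.mkQ ∘ₗ b)) ≤ 1 := by
    rw [← hquot]
    exact Submodule.finrank_le _
  have hrk := LinearMap.finrank_range_add_finrank_ker (V₁.mkQ ∘ₗ b)
  have hW₁rank : finrank ℂ W ≤ finrank ℂ W₁ + 1 := by
    rw [hker]; omega
  have hdisj : Disjoint (ℂ ∙ w) W₁ := by
    rw [disjoint_def]
    intro x hxw hxW₁
    obtain ⟨a, rfl⟩ := Submodule.mem_span_singleton.mp hxw
    rcases eq_or_ne a 0 with rfl | ha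
    · simp
    · exfalso
      apply hbw
      have : b (a • w) ∈ V₁ := hxW₁
      have h2 : a⁻¹ • b (a • w) ∈ V₁ := Submodule.smul_mem _ _ this
      rwa [_root_.map_smul, smul_smul, inv_mul_cancel₀ ha, one_smul] at h2
  have hspanrank : finrank ℂ (ℂ ∙ w) = 1 := finrank_span_singleton hw0
  have hsup : finrank ℂ ((ℂ ∙ w) ⊔ W₁ : Submodule ℂ W) = finrank ℂ W₁ + 1 := by
    have := Submodule.finrank_sup_add_finrank_inf_eq (ℂ ∙ w) W₁
    rw [hdisj.eq_bot] at this
    simp only [finrank_bot, add_zero] at this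
    omega
  have hcompl : IsCompl (ℂ ∙ w) W₁ := by
    refine ⟨hdisj, codisjoint_iff.mpr ?_⟩
    apply Submodule.eq_top_of_finrank_eq
    have hle := Submodule.finrank_le ((ℂ ∙ w) ⊔ W₁ : Submodule ℂ W)
    omega
  refine ⟨hcompl, ?_⟩
  have := Submodule.finrank_add_eq_of_isCompl hcompl
  omega

def RectDiagBases (V W : Type) [AddCommGroup V] [Module ℂ V] [AddCommGroup W] [Module ℂ W]
    (dV dW : ℕ) (b : W →ₗ[ℂ] V) (c : V →ₗ[ℂ] W) : Prop :=
  ∃ v : Basis (Fin dV) ℂ V, ∃ w : Basis (Fin dW) ℂ W,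
    (∀ j : Fin dW, ∀ hj : (j : ℕ) < dV, ∃ β : ℂ, b (w j) = β • v ⟨j, hj⟩) ∧
    (∀ j : Fin dW, dV ≤ (j : ℕ) → b (w j) = 0) ∧
    (∀ i : Fin dV, ∀ hi : (i : ℕ) < dW, ∃ γ : ℂ, c (v i) = γ • w ⟨i, hi⟩) ∧
    (∀ i : Fin dV, dW ≤ (i : ℕ) → c (v i) = 0)

noncomputable def consBasis {V : Type} [AddCommGroup V] [Module ℂ V] {V₁ : Submodule ℂ V}
    {v : V} (hcompl : IsCompl (ℂ ∙ v) V₁) (hv0 : v ≠ 0) {d : ℕ}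
    (v₁ : Basis (Fin d) ℂ V₁) : Basis (Fin (d + 1)) ℂ V := by
  have hli₁ : LinearIndependent ℂ (fun i => ((v₁ i : V))) :=
    v₁.linearIndependent.map' V₁.subtype (Submodule.ker_subtype V₁)
  have hsp₁ : span ℂ (Set.range fun i => ((v₁ i : V))) = V₁ := by
    have : (fun i => ((v₁ i : V))) = V₁.subtype ∘ v₁ := rfl
    rw [this, Set.range_comp, ← Submodule.map_span, v₁.span_eq, Submodule.map_top,
      Submodule.range_subtype]
  have hvnot : v ∉ span ℂ (Set.range fun i => ((v₁ i : V))) := by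
    rw [hsp₁]
    intro hmem
    have : v ∈ (ℂ ∙ v) ⊓ V₁ := ⟨Submodule.mem_span_singleton_self v, hmem⟩
    rw [hcompl.disjoint.eq_bot] at this
    exact hv0 (by simpa using this)
  refine Basis.mk (hli₁.fin_cons hvnot) ?_
  rw [Fin.range_cons, Submodule.span_insert, hsp₁]
  exact le_of_eq (by rw [← codisjoint_iff.mp hcompl.codisjoint])

lemma consBasis_zero {V : Type} [AddCommGroup V] [Module ℂ V] {V₁ : Submodule ℂ V}
    {v : V} (hcompl : IsCompl (ℂ ∙ v) V₁) (hv0 : v ≠ 0) {d : ℕ}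
    (v₁ : Basis (Fin d) ℂ V₁) (h : 0 < d + 1) :
    consBasis hcompl hv0 v₁ ⟨0, h⟩ = v := by
  rw [consBasis, Basis.mk_apply]
  exact Fin.cons_zero _ _

lemma consBasis_succ {V : Type} [AddCommGroup V] [Module ℂ V] {V₁ : Submodule ℂ V}
    {v : V} (hcompl : IsCompl (ℂ ∙ v) V₁) (hv0 : v ≠ 0) {d : ℕ}
    (v₁ : Basis (Fin d) ℂ V₁) (k : ℕ) (h : k + 1 < d + 1) :
    consBasis hcompl hv0 v₁ ⟨k + 1, h⟩ = (v₁ ⟨k, by omega⟩ : V) := by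
  rw [consBasis, Basis.mk_apply,
    show (⟨k + 1, h⟩ : Fin (d + 1)) = Fin.succ ⟨k, by omega⟩ from rfl, Fin.cons_succ]

lemma step_lemma {N : ℕ}
    (IH : ∀ (V W : Type) [AddCommGroup V] [Module ℂ V] [AddCommGroup W] [Module ℂ W],
      ∀ [FiniteDimensional ℂ V] [FiniteDimensional ℂ W], ∀ (dV dW : ℕ),
      finrank ℂ V = dV → finrank ℂ W = dW → dV + dW ≤ N →
      ∀ (b : W →ₗ[ℂ] V) (c : V →ₗ[ℂ] W),
      (⨆ μ : ℂ, Module.End.eigenspace (b ∘ₗ c) μ = ⊤) →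
      (⨆ μ : ℂ, Module.End.eigenspace (c ∘ₗ b) μ = ⊤) →
      RectDiagBases V W dV dW b c)
    (V W : Type) [AddCommGroup V] [Module ℂ V] [AddCommGroup W] [Module ℂ W]
    [FiniteDimensional ℂ V] [FiniteDimensional ℂ W] (dV dW : ℕ)
    (hdV : finrank ℂ V = dV) (hdW : finrank ℂ W = dW) (hN : dV + dW ≤ N + 2)
    (b : W →ₗ[ℂ] V) (c : V →ₗ[ℂ] W)
    (hbc : ⨆ μ : ℂ, Module.End.eigenspace (b ∘ₗ c) μ = ⊤)
    (hcb : ⨆ μ : ℂ, Module.End.eigenspace (c ∘ₗ b) μ = ⊤)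
    (w : W) (hbw : b w ≠ 0) (γ : ℂ) (hcv : c (b w) = γ • w) :
    RectDiagBases V W dV dW b c := by
  set v := b w with hv
  have hw0 : w ≠ 0 := by rintro rfl; exact hbw (by simp [hv])
  have heig : (b ∘ₗ c) v = γ • v := by
    rw [LinearMap.comp_apply, hcv, _root_.map_smul, hv]
  obtain ⟨V₁, hVcompl, hVinv⟩ := exists_invariant_compl hbc heig
  have hvnot : v ∉ V₁ := by
    intro hmem
    have : v ∈ (ℂ ∙ v) ⊓ V₁ := ⟨Submodule.mem_span_singleton_self v, hmem⟩
    rw [hVcompl.disjoint.eq_bot] at this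
    exact hbw (by simpa using this)
  have hV₁ : finrank ℂ V₁ + 1 = finrank ℂ V := by
    have := Submodule.finrank_add_eq_of_isCompl hVcompl
    rw [finrank_span_singleton hbw] at this
    omega
  obtain ⟨hWcompl, hW₁⟩ := compl_comap b hV₁ hvnot
  set W₁ := V₁.comap b with hW₁def
  have hbm : ∀ x ∈ W₁, b x ∈ V₁ := fun x hx => hx
  have hcm : ∀ x ∈ V₁, c x ∈ W₁ := fun x hx => hVinv x hx
  have hWinv : ∀ x ∈ W₁, (c ∘ₗ b) x ∈ W₁ := fun x hx => hcm _ (hbm x hx)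
  set b₁ : W₁ →ₗ[ℂ] V₁ := b.restrict hbm with hb₁
  set c₁ : V₁ →ₗ[ℂ] W₁ := c.restrict hcm with hc₁
  have hbc₁ : (b₁ ∘ₗ c₁ : V₁ →ₗ[ℂ] V₁) = (b ∘ₗ c).restrict hVinv := by
    ext x; rfl
  have hcb₁ : (c₁ ∘ₗ b₁ : W₁ →ₗ[ℂ] W₁) = (c ∘ₗ b).restrict hWinv := by
    ext x; rfl
  have hbc' : ⨆ μ : ℂ, Module.End.eigenspace (b₁ ∘ₗ c₁) μ = ⊤ := by
    rw [hbc₁]; exact Module.End.genEigenspace_restrict_eq_top hVinv hbc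
  have hcb' : ⨆ μ : ℂ, Module.End.eigenspace (c₁ ∘ₗ b₁) μ = ⊤ := by
    rw [hcb₁]; exact Module.End.genEigenspace_restrict_eq_top hWinv hcb
  obtain ⟨v₁, w₁, hA, hB, hC, hD⟩ :=
    IH V₁ W₁ (finrank ℂ V₁) (finrank ℂ W₁) rfl rfl (by omega) b₁ c₁ hbc' hcb'
  -- assemble bases
  have hfV : finrank ℂ V₁ + 1 = dV := by omega
  have hfW : finrank ℂ W₁ + 1 = dW := by omega
  set vB : Basis (Fin dV) ℂ V := (consBasis hVcompl hbw v₁).reindex (finCongr hfV) with hvB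
  set wB : Basis (Fin dW) ℂ W := (consBasis hWcompl hw0 w₁).reindex (finCongr hfW) with hwB
  have hvBval : ∀ (k : ℕ) (hk : k < dV), vB ⟨k, hk⟩ = consBasis hVcompl hbw v₁ ⟨k, by omega⟩ := by
    intro k hk
    rw [hvB, Basis.reindex_apply]
    rfl
  have hwBval : ∀ (k : ℕ) (hk : k < dW), wB ⟨k, hk⟩ = consBasis hWcompl hw0 w₁ ⟨k, by omega⟩ := by
    intro k hk
    rw [hwB, Basis.reindex_apply]
    rfl
  refine ⟨vB, wB, ?_, ?_, ?_, ?_⟩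
  · rintro ⟨jv, hjW⟩ hj
    match jv, hjW, hj with
    | 0, hjW, hj =>
      refine ⟨1, ?_⟩
      rw [hwBval 0 hjW, hvBval 0 hj, consBasis_zero, consBasis_zero, one_smul]
    | (k+1), hjW, hj =>
      have hj' : k + 1 < dV := hj
      have hkW : k < finrank ℂ W₁ := by omega
      have hkV : k < finrank ℂ V₁ := by omega
      obtain ⟨β, hβ⟩ := hA ⟨k, hkW⟩ hkV
      refine ⟨β, ?_⟩
      rw [hwBval (k+1) hjW, hvBval (k+1) hj, consBasis_succ, consBasis_succ]
      have : b ((w₁ ⟨k, hkW⟩ : W)) = ((b₁ (w₁ ⟨k, hkW⟩) : V₁) : V) := rfl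
      rw [this, hβ]
      simp
  · rintro ⟨jv, hjW⟩ hj
    simp only at hj
    have hjv : jv ≠ 0 := by omega
    obtain ⟨k, rfl⟩ : ∃ k, jv = k + 1 := ⟨jv - 1, by omega⟩
    have hkW : k < finrank ℂ W₁ := by omega
    have hk0 : finrank ℂ V₁ ≤ k := by omega
    rw [hwBval (k+1) hjW, consBasis_succ]
    have : b ((w₁ ⟨k, hkW⟩ : W)) = ((b₁ (w₁ ⟨k, hkW⟩) : V₁) : V) := rfl
    rw [this, hB ⟨k, hkW⟩ hk0]
    rfl
  · rintro ⟨iv, hiV⟩ hi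
    match iv, hiV, hi with
    | 0, hiV, hi =>
      refine ⟨γ, ?_⟩
      rw [hvBval 0 hiV, hwBval 0 hi, consBasis_zero, consBasis_zero, hcv]
    | (k+1), hiV, hi =>
      have hi' : k + 1 < dW := hi
      have hkV : k < finrank ℂ V₁ := by omega
      have hkW : k < finrank ℂ W₁ := by omega
      obtain ⟨δ, hδ⟩ := hC ⟨k, hkV⟩ hkW
      refine ⟨δ, ?_⟩
      rw [hvBval (k+1) hiV, hwBval (k+1) hi, consBasis_succ, consBasis_succ]
      have : c ((v₁ ⟨k, hkV⟩ : V)) = ((c₁ (v₁ ⟨k, hkV⟩) : W₁) : W) := rfl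
      rw [this, hδ]
      simp
  · rintro ⟨iv, hiV⟩ hi
    simp only at hi
    have hiv : iv ≠ 0 := by omega
    obtain ⟨k, rfl⟩ : ∃ k, iv = k + 1 := ⟨iv - 1, by omega⟩
    have hkV : k < finrank ℂ V₁ := by omega
    have hk0 : finrank ℂ W₁ ≤ k := by omega
    rw [hvBval (k+1) hiV, consBasis_succ]
    have : c ((v₁ ⟨k, hkV⟩ : V)) = ((c₁ (v₁ ⟨k, hkV⟩) : W₁) : W) := rfl
    rw [this, hD ⟨k, hkV⟩ hk0]
    rfl

lemma rect_base (V W : Type) [AddCommGroup V] [Module ℂ V] [AddCommGroup W] [Module ℂ W]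
    [FiniteDimensional ℂ V] [FiniteDimensional ℂ W] (dV dW : ℕ)
    (hdV : finrank ℂ V = dV) (hdW : finrank ℂ W = dW)
    (b : W →ₗ[ℂ] V) (c : V →ₗ[ℂ] W) (hb : b = 0) (hc : c = 0) :
    RectDiagBases V W dV dW b c := by
  refine ⟨(finBasis ℂ V).reindex (finCongr hdV), (finBasis ℂ W).reindex (finCongr hdW),
    ?_, ?_, ?_, ?_⟩ <;> intro j hj <;>
    simp [hb, hc] <;> exact ⟨0, by simp⟩

lemma RectDiagBases.symm {V W : Type} [AddCommGroup V] [Module ℂ V] [AddCommGroup W] [Module ℂ W]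
    {dV dW : ℕ} {b : W →ₗ[ℂ] V} {c : V →ₗ[ℂ] W}
    (h : RectDiagBases W V dW dV c b) : RectDiagBases V W dV dW b c := by
  obtain ⟨w, v, hA, hB, hC, hD⟩ := h
  exact ⟨v, w, hC, hD, hA, hB⟩

theorem rect_diag_main (N : ℕ) : ∀ (V W : Type) [AddCommGroup V] [Module ℂ V],
    ∀ [AddCommGroup W] [Module ℂ W],
    ∀ [FiniteDimensional ℂ V] [FiniteDimensional ℂ W], ∀ (dV dW : ℕ),
    finrank ℂ V = dV → finrank ℂ W = dW → dV + dW ≤ N →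
    ∀ (b : W →ₗ[ℂ] V) (c : V →ₗ[ℂ] W),
    (⨆ μ : ℂ, Module.End.eigenspace (b ∘ₗ c) μ = ⊤) →
    (⨆ μ : ℂ, Module.End.eigenspace (c ∘ₗ b) μ = ⊤) →
    RectDiagBases V W dV dW b c := by
  induction N with
  | zero =>
    intro V W _ _ _ _ _ _ dV dW hdV hdW hN b c _ _
    have hV0 : finrank ℂ V = 0 := by omega
    have hW0 : finrank ℂ W = 0 := by omega
    have : Subsingleton V := Module.finrank_zero_iff.mp hV0
    have : Subsingleton W := Module.finrank_zero_iff.mp hW0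
    exact rect_base V W dV dW hdV hdW b c
      (LinearMap.ext fun x => Subsingleton.elim _ _)
      (LinearMap.ext fun x => Subsingleton.elim _ _)
  | succ N IHN =>
    intro V W _ _ _ _ _ _ dV dW hdV hdW hN b c hbc hcb
    by_cases h1 : b ∘ₗ c = 0
    · by_cases h2 : c ∘ₗ b = 0
      · by_cases h3 : b = 0
        · by_cases h4 : c = 0
          · exact rect_base V W dV dW hdV hdW b c h3 h4
          · -- c ≠ 0 : mirror step with some v, c v ≠ 0
            obtain ⟨v, hv⟩ := DFunLike.ne_iff.mp h4
            refine RectDiagBases.symm ?_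
            refine step_lemma (N := N) (fun V W _ _ _ _ _ _ => IHN V W) W V dW dV hdW hdV
              (by omega) c b hcb hbc v (by simpa using hv) 0 ?_
            have : b (c v) = (b ∘ₗ c) v := rfl
            rw [this, h1]
            simp
        · obtain ⟨w, hw⟩ := DFunLike.ne_iff.mp h3
          refine step_lemma (N := N) (fun V W _ _ _ _ _ _ => IHN V W) V W dV dW hdV hdW
            (by omega) b c hbc hcb w (by simpa using hw) 0 ?_
          have : c (b w) = (c ∘ₗ b) w := rfl
          rw [this, h2]
          simp
      · -- cb ≠ 0
        obtain ⟨μ, hμ, x, hx0, hx⟩ := exists_nonzero_eigenvalue hcb h2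
        refine RectDiagBases.symm ?_
        refine step_lemma (N := N) (fun V W _ _ _ _ _ _ => IHN V W) W V dW dV hdW hdV
          (by omega) c b hcb hbc (μ⁻¹ • b x) ?_ μ ?_
        · have : c (μ⁻¹ • b x) = μ⁻¹ • (c ∘ₗ b) x := by
            simp [_root_.map_smul]
          rw [this, hx, smul_smul, inv_mul_cancel₀ hμ, one_smul]
          exact hx0
        · have hcbx : c (μ⁻¹ • b x) = x := by
            have : c (μ⁻¹ • b x) = μ⁻¹ • (c ∘ₗ b) x := by simp [_root_.map_smul]
            rw [this, hx, smul_smul, inv_mul_cancel₀ hμ, one_smul]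
          rw [hcbx]
          have : b x = μ • (μ⁻¹ • b x) := by
            rw [smul_smul, mul_inv_cancel₀ hμ, one_smul]
          exact this
    · -- bc ≠ 0
      obtain ⟨μ, hμ, x, hx0, hx⟩ := exists_nonzero_eigenvalue hbc h1
      refine step_lemma (N := N) (fun V W _ _ _ _ _ _ => IHN V W) V W dV dW hdV hdW
        (by omega) b c hbc hcb (μ⁻¹ • c x) ?_ μ ?_
      · have : b (μ⁻¹ • c x) = μ⁻¹ • (b ∘ₗ c) x := by simp [_root_.map_smul]
        rw [this, hx, smul_smul, inv_mul_cancel₀ hμ, one_smul]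
        exact hx0
      · have hbcx : b (μ⁻¹ • c x) = x := by
          have : b (μ⁻¹ • c x) = μ⁻¹ • (b ∘ₗ c) x := by simp [_root_.map_smul]
          rw [this, hx, smul_smul, inv_mul_cancel₀ hμ, one_smul]
        rw [hbcx]
        rw [smul_smul, mul_inv_cancel₀ hμ, one_smul]

theorem gl_mn_final (m n : ℕ) (hm : 1 ≤ m) (hn : 1 ≤ n)
    (B : Matrix (Fin m) (Fin n) ℂ) (C : Matrix (Fin n) (Fin m) ℂ)
    (hBC : ∃ g, IsUnit g ∧ ∃ d, g * (B * C) * g⁻¹ = diagonal d)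
    (hCB : ∃ g, IsUnit g ∧ ∃ d, g * (C * B) * g⁻¹ = diagonal d) :
    ∃ g : Matrix (Fin m) (Fin m) ℂ, IsUnit g ∧
    ∃ h : Matrix (Fin n) (Fin n) ℂ, IsUnit h ∧
      (∀ (i : Fin m) (j : Fin n), (i : ℕ) ≠ (j : ℕ) → (g * B * h⁻¹) i j = 0) ∧
      (∀ (i : Fin n) (j : Fin m), (i : ℕ) ≠ (j : ℕ) → (h * C * g⁻¹) i j = 0) := by
  classical
  set b : (Fin n → ℂ) →ₗ[ℂ] (Fin m → ℂ) := B.mulVecLin with hbdef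
  set c : (Fin m → ℂ) →ₗ[ℂ] (Fin n → ℂ) := C.mulVecLin with hcdef
  have hbc' : ⨆ μ : ℂ, Module.End.eigenspace (b ∘ₗ c) μ = ⊤ := by
    have := eig_top_of_isDiagonalizable hBC
    rwa [Matrix.mulVecLin_mul] at this
  have hcb' : ⨆ μ : ℂ, Module.End.eigenspace (c ∘ₗ b) μ = ⊤ := by
    have := eig_top_of_isDiagonalizable hCB
    rwa [Matrix.mulVecLin_mul] at this
  obtain ⟨v, w, hA, hB', hC', hD⟩ :=
    rect_diag_main (m + n) (Fin m → ℂ) (Fin n → ℂ) m n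
      (Module.finrank_fin_fun ℂ) (Module.finrank_fin_fun ℂ) le_rfl b c hbc' hcb'
  set em := Pi.basisFun ℂ (Fin m) with hem
  set en := Pi.basisFun ℂ (Fin n) with hen
  set g := LinearMap.toMatrix em v LinearMap.id with hg
  set g' := LinearMap.toMatrix v em LinearMap.id with hg'
  set h := LinearMap.toMatrix en w LinearMap.id with hh
  set h' := LinearMap.toMatrix w en LinearMap.id with hh'
  have hgg' : g * g' = 1 := by
    rw [hg, hg', ← LinearMap.toMatrix_comp v em v LinearMap.id LinearMap.id]
    simp [LinearMap.toMatrix_id]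
  have hg'g : g' * g = 1 := by
    rw [hg, hg', ← LinearMap.toMatrix_comp em v em LinearMap.id LinearMap.id]
    simp [LinearMap.toMatrix_id]
  have hhh' : h * h' = 1 := by
    rw [hh, hh', ← LinearMap.toMatrix_comp w en w LinearMap.id LinearMap.id]
    simp [LinearMap.toMatrix_id]
  have hh'h : h' * h = 1 := by
    rw [hh, hh', ← LinearMap.toMatrix_comp en w en LinearMap.id LinearMap.id]
    simp [LinearMap.toMatrix_id]
  have hBmat : B = LinearMap.toMatrix en em b := by
    ext i j
    rw [LinearMap.toMatrix_apply]
    simp [hbdef, hen, hem, Matrix.mulVecLin_apply, Matrix.mulVec_single, Pi.basisFun_repr]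
  have hCmat : C = LinearMap.toMatrix em en c := by
    ext i j
    rw [LinearMap.toMatrix_apply]
    simp [hcdef, hem, hen, Matrix.mulVecLin_apply, Matrix.mulVec_single, Pi.basisFun_repr]
  have hinvh : h⁻¹ = h' := Matrix.inv_eq_right_inv hhh'
  have hinvg : g⁻¹ = g' := Matrix.inv_eq_right_inv hgg'
  have hgBh : g * B * h⁻¹ = LinearMap.toMatrix w v b := by
    rw [hinvh, hg, hh', hBmat,
      ← LinearMap.toMatrix_comp en em v LinearMap.id b,
      ← LinearMap.toMatrix_comp w en v (LinearMap.id ∘ₗ b) LinearMap.id]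
    simp
  have hhCg : h * C * g⁻¹ = LinearMap.toMatrix v w c := by
    rw [hinvg, hh, hg', hCmat,
      ← LinearMap.toMatrix_comp em en w LinearMap.id c,
      ← LinearMap.toMatrix_comp v em w (LinearMap.id ∘ₗ c) LinearMap.id]
    simp
  refine ⟨g, ⟨⟨g, g', hgg', hg'g⟩, rfl⟩, h, ⟨⟨h, h', hhh', hh'h⟩, rfl⟩, ?_, ?_⟩
  · intro i j hij
    rw [hgBh, LinearMap.toMatrix_apply]
    by_cases hj : (j : ℕ) < m
    · obtain ⟨β, hβ⟩ := hA j hj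
      rw [hβ, _root_.map_smul, Basis.repr_self]
      simp only [Finsupp.smul_single, smul_eq_mul, mul_one, Finsupp.single_apply]
      rw [if_neg]
      intro hcontra
      exact hij (by rw [← hcontra])
    · rw [hB' j (by omega)]
      simp
  · intro i j hij
    rw [hhCg, LinearMap.toMatrix_apply]
    by_cases hj : (j : ℕ) < n
    · obtain ⟨γ, hγ⟩ := hC' j hj
      rw [hγ, _root_.map_smul, Basis.repr_self]
      simp only [Finsupp.smul_single, smul_eq_mul, mul_one, Finsupp.single_apply]
      rw [if_neg]
      intro hcontra
      exact hij (by rw [← hcontra])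
    · rw [hD j (by omega)]
      simp


/-- Normal form for odd elements of gl(m|n) with semisimple square: up to the adjoint
action of GL(m) × GL(n), both blocks can be made rectangular-diagonal. -/
theorem gl_mn_semisimple_normal_form (m n : ℕ) (hm : 1 ≤ m) (hn : 1 ≤ n)
    (B : Matrix (Fin m) (Fin n) ℂ) (C : Matrix (Fin n) (Fin m) ℂ)
    (hBC : (B * C).IsDiagonalizable) (hCB : (C * B).IsDiagonalizable) :
    ∃ g : Matrix (Fin m) (Fin m) ℂ, IsUnit g ∧
    ∃ h : Matrix (Fin n) (Fin n) ℂ, IsUnit h ∧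
      (∀ (i : Fin m) (j : Fin n), (i : ℕ) ≠ (j : ℕ) → (g * B * h⁻¹) i j = 0) ∧
      (∀ (i : Fin n) (j : Fin m), (i : ℕ) ≠ (j : ℕ) → (h * C * g⁻¹) i j = 0) := by
  exact gl_mn_final m n hm hn B C hBC hCB
end

section
/- Let p, q, t ≥ 0, let R ∈ M_p(ℂ) be invertible, and let U ∈ M_{p×t}(ℂ), V ∈ M_{q×t}(ℂ). If the block matrix M = [[R, 0, U],[0, 0, V],[0, 0, 0]] ∈ M_{p+q+t}(ℂ) is diagonalizable, then V = 0. (This is the step in the classification of odd elements of p(n) with semisimple square asserting that, once the skew-symmetric block C₁ has been brought to the form [[R, 0],[0, 0]] with R invertible, semisimplicity of u² forces the block C₂ of C to have the form [[S, T],[0, 0]].) -/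
open Matrix

/-- For a diagonalizable matrix, `M² x = 0` implies `M x = 0`. -/
lemma Matrix.IsDiagonalizable.mulVec_eq_zero {ι : Type*} [Fintype ι] [DecidableEq ι]
    {M : Matrix ι ι ℂ} (hM : M.IsDiagonalizable) (x : ι → ℂ)
    (hx : M *ᵥ (M *ᵥ x) = 0) : M *ᵥ x = 0 := by
  obtain ⟨g, hg, d, hgd⟩ := hM
  have hgdet : IsUnit g.det := (Matrix.isUnit_iff_isUnit_det g).mp hg
  have h1 : g⁻¹ * g = 1 := Matrix.nonsing_inv_mul g hgdet
  set D := Matrix.diagonal d with hD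
  have hgM : g * M = D * g := by
    calc g * M = (g * M * g⁻¹) * g := by
          rw [Matrix.mul_assoc, h1, Matrix.mul_one]
    _ = D * g := by rw [hgd]
  have hswap : ∀ y : ι → ℂ, g *ᵥ (M *ᵥ y) = D *ᵥ (g *ᵥ y) := by
    intro y
    rw [Matrix.mulVec_mulVec, Matrix.mulVec_mulVec, hgM]
  have key : D *ᵥ (D *ᵥ (g *ᵥ x)) = 0 := by
    rw [← hswap, ← hswap, hx, Matrix.mulVec_zero]
  have hDy : D *ᵥ (g *ᵥ x) = 0 := by
    funext i
    have hi := congrFun key i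
    simp only [hD, Matrix.mulVec_diagonal, Pi.zero_apply] at hi ⊢
    rcases mul_eq_zero.mp hi with h | h
    · simp [h]
    · exact h
  have : g *ᵥ (M *ᵥ x) = 0 := by rw [hswap, hDy]
  calc M *ᵥ x = (g⁻¹ * g) *ᵥ (M *ᵥ x) := by rw [h1, Matrix.one_mulVec]
  _ = g⁻¹ *ᵥ (g *ᵥ (M *ᵥ x)) := by rw [← Matrix.mulVec_mulVec]
  _ = 0 := by rw [this, Matrix.mulVec_zero]

/-- If `R` is invertible and the block matrix `[[R, 0, U],[0, 0, V],[0, 0, 0]]`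
(with diagonal blocks of sizes `p`, `q`, `t`) is diagonalizable, then `V = 0`. -/
theorem diagonalizable_forces_block_zero (p q t : ℕ)
    (R : Matrix (Fin p) (Fin p) ℂ) (hR : IsUnit R)
    (U : Matrix (Fin p) (Fin t) ℂ) (V : Matrix (Fin q) (Fin t) ℂ)
    (hM : (Matrix.fromBlocks R (Matrix.fromCols 0 U) 0
            (Matrix.fromBlocks 0 V 0 0)).IsDiagonalizable) :
    V = 0 := by
  set M := Matrix.fromBlocks R (Matrix.fromCols 0 U) 0
      (Matrix.fromBlocks 0 V 0 0) with hMdef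
  have hRdet : IsUnit R.det := (Matrix.isUnit_iff_isUnit_det R).mp hR
  have hRR : R * R⁻¹ = 1 := Matrix.mul_nonsing_inv R hRdet
  ext i j
  set c : Fin t → ℂ := Pi.single j 1 with hc
  set x : Fin p ⊕ Fin q ⊕ Fin t → ℂ :=
    Sum.elim (-((R⁻¹ * U) *ᵥ c)) (Sum.elim (0 : Fin q → ℂ) c) with hxdef
  have hMx : M *ᵥ x = Sum.elim (0 : Fin p → ℂ) (Sum.elim (V *ᵥ c) (0 : Fin t → ℂ)) := by
    rw [hMdef, hxdef, Matrix.fromBlocks_mulVec]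
    funext k
    rcases k with k | k
    · simp [Matrix.fromCols_mulVec_sumElim, Matrix.mulVec_neg,
        Matrix.mulVec_mulVec, ← Matrix.mul_assoc, hRR]
    · simp [Matrix.fromBlocks_mulVec]
  have hMMx : M *ᵥ (M *ᵥ x) = 0 := by
    rw [hMx, hMdef, Matrix.fromBlocks_mulVec]
    funext k
    rcases k with k | k
    · simp [Matrix.fromCols_mulVec_sumElim]
    · simp [Matrix.fromBlocks_mulVec]
  have hzero := hM.mulVec_eq_zero x hMMx
  rw [hMx] at hzero
  have := congrFun hzero (Sum.inr (Sum.inl i))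
  simpa [hc] using this
end
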